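/- Every iterated Lie bracket of length 5 of the vector fields g₁(z) = (1, 0, −z₂, −z₃, κz₂³ − z₄) and g₂(z) = (0, 1, 0, −αz₂², −θz₂z₃) vanishes identically; more precisely, if X is any bracket of length 4 in g₁, g₂, then [g₁,X] = 0 and [g₂,X] = 0 on ℝ⁵. -/

import Mathlib

def g1 (κ : ℝ) : (Fin 5 → ℝ) → (Fin 5 → ℝ) :=
  fun z => ![1, 0, -z 1, -z 2, κ * (z 1)^3 - z 3]

def g2 (α θ : ℝ) : (Fin 5 → ℝ) → (Fin 5 → ℝ) :=
  fun z => ![0, 1, 0, -α * (z 1)^2, -θ * z 1 * z 2]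

noncomputable def lieBracket (f g : (Fin 5 → ℝ) → (Fin 5 → ℝ)) : (Fin 5 → ℝ) → (Fin 5 → ℝ) :=
  fun z => fderiv ℝ g z (f z) - fderiv ℝ f z (g z)

/-- `IterBracket α κ θ k X` means `X` is an iterated Lie bracket of length `k`
of the generators `g₁, g₂`. -/
inductive IterBracket (α κ θ : ℝ) : ℕ → ((Fin 5 → ℝ) → (Fin 5 → ℝ)) → Prop
  | base1 : IterBracket α κ θ 1 (g1 κ)
  | base2 : IterBracket α κ θ 1 (g2 α θ)
  | br {j k : ℕ} {X Y : (Fin 5 → ℝ) → (Fin 5 → ℝ)} :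
      IterBracket α κ θ j X → IterBracket α κ θ k Y →
      IterBracket α κ θ (j + k) (lieBracket X Y)

/-! ### Auxiliary definitions -/

noncomputable def P (i : Fin 5) : (Fin 5 → ℝ) →L[ℝ] ℝ := ContinuousLinearMap.proj i

/-- General form of length-2 brackets. -/
def F2 (e f : ℝ) : (Fin 5 → ℝ) → (Fin 5 → ℝ) := fun z => ![0, 0, e, 0, f * (z 1)^2]

/-- General form of length-3 brackets. -/
def F3 (a b : ℝ) : (Fin 5 → ℝ) → (Fin 5 → ℝ) := fun _z => ![0, 0, 0, a, b * _z 1]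

/-- General form of length-4 brackets. -/
def F4 (s : ℝ) : (Fin 5 → ℝ) → (Fin 5 → ℝ) := fun _z => ![0, 0, 0, 0, s]

/-! ### Derivatives -/

lemma hg1 (κ : ℝ) (z : Fin 5 → ℝ) :
    HasFDerivAt (g1 κ) (ContinuousLinearMap.pi
      ![0, 0, -P 1, -P 2, (κ * (3 * z 1 ^ 2)) • P 1 - P 3]) z := by
  rw [hasFDerivAt_pi']
  intro i
  fin_cases i <;>
    simp only [g1, ContinuousLinearMap.proj_pi, Matrix.cons_val_zero, Matrix.cons_val_one,
      Matrix.head_cons, Matrix.cons_val_two, Matrix.tail_cons, Matrix.cons_val_three,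
      Matrix.cons_val_four, Fin.isValue]
  · exact hasFDerivAt_const _ _
  · exact hasFDerivAt_const _ _
  · exact (hasFDerivAt_apply 1 z).neg
  · exact (hasFDerivAt_apply 2 z).neg
  · have h := ((((hasFDerivAt_apply (𝕜 := ℝ) 1 z).mul (hasFDerivAt_apply 1 z)).mul
      (hasFDerivAt_apply 1 z)).const_mul κ).sub (hasFDerivAt_apply 3 z)
    exact (h.congr_fderiv (by ext v; simp [P]; ring)).congr_of_eventuallyEq
      (Filter.Eventually.of_forall fun w => by show κ * w 1 ^ 3 - w 3 = _; simp only [Pi.mul_apply, Pi.sub_apply]; ring)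

lemma hg2 (α θ : ℝ) (z : Fin 5 → ℝ) :
    HasFDerivAt (g2 α θ) (ContinuousLinearMap.pi
      ![0, 0, 0, (-α * (2 * z 1)) • P 1, (-θ * z 2) • P 1 + (-θ * z 1) • P 2]) z := by
  rw [hasFDerivAt_pi']
  intro i
  fin_cases i <;>
    simp only [g2, ContinuousLinearMap.proj_pi, Matrix.cons_val_zero, Matrix.cons_val_one,
      Matrix.head_cons, Matrix.cons_val_two, Matrix.tail_cons, Matrix.cons_val_three,
      Matrix.cons_val_four, Fin.isValue]
  · exact hasFDerivAt_const _ _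
  · exact hasFDerivAt_const _ _
  · exact hasFDerivAt_const _ _
  · have h := (((hasFDerivAt_apply (𝕜 := ℝ) 1 z).mul (hasFDerivAt_apply 1 z)).const_mul (-α))
    exact (h.congr_fderiv (by ext v; simp [P]; ring)).congr_of_eventuallyEq
      (Filter.Eventually.of_forall fun w => by show -α * w 1 ^ 2 = _; simp only [Pi.mul_apply]; ring)
  · have h := (((hasFDerivAt_apply (𝕜 := ℝ) 1 z).const_mul (-θ)).mul (hasFDerivAt_apply 2 z))
    exact (h.congr_fderiv (by ext v; simp [P]; ring)).congr_of_eventuallyEq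
      (Filter.Eventually.of_forall fun w => by show -θ * w 1 * w 2 = _; simp only [Pi.mul_apply])

lemma hF2 (e f : ℝ) (z : Fin 5 → ℝ) :
    HasFDerivAt (F2 e f) (ContinuousLinearMap.pi
      ![0, 0, 0, 0, (f * (2 * z 1)) • P 1]) z := by
  rw [hasFDerivAt_pi']
  intro i
  fin_cases i <;>
    simp only [F2, ContinuousLinearMap.proj_pi, Matrix.cons_val_zero, Matrix.cons_val_one,
      Matrix.head_cons, Matrix.cons_val_two, Matrix.tail_cons, Matrix.cons_val_three,
      Matrix.cons_val_four, Fin.isValue]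
  · exact hasFDerivAt_const _ _
  · exact hasFDerivAt_const _ _
  · exact hasFDerivAt_const _ _
  · exact hasFDerivAt_const _ _
  · have h := (((hasFDerivAt_apply (𝕜 := ℝ) 1 z).mul (hasFDerivAt_apply 1 z)).const_mul f)
    exact (h.congr_fderiv (by ext v; simp [P]; ring)).congr_of_eventuallyEq
      (Filter.Eventually.of_forall fun w => by show f * w 1 ^ 2 = _; simp only [Pi.mul_apply]; ring)

lemma hF3 (a b : ℝ) (z : Fin 5 → ℝ) :
    HasFDerivAt (F3 a b) (ContinuousLinearMap.pi ![0, 0, 0, 0, b • P 1]) z := by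
  rw [hasFDerivAt_pi']
  intro i
  fin_cases i <;>
    simp only [F3, ContinuousLinearMap.proj_pi, Matrix.cons_val_zero, Matrix.cons_val_one,
      Matrix.head_cons, Matrix.cons_val_two, Matrix.tail_cons, Matrix.cons_val_three,
      Matrix.cons_val_four, Fin.isValue]
  · exact hasFDerivAt_const _ _
  · exact hasFDerivAt_const _ _
  · exact hasFDerivAt_const _ _
  · exact hasFDerivAt_const _ _
  · exact (hasFDerivAt_apply (𝕜 := ℝ) 1 z).const_mul b

lemma hF4 (s : ℝ) (z : Fin 5 → ℝ) : HasFDerivAt (F4 s) (0 : (Fin 5 → ℝ) →L[ℝ] (Fin 5 → ℝ)) z :=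
  hasFDerivAt_const _ _

/-! ### Bracket computations -/

lemma lie_swap (f g : (Fin 5 → ℝ) → (Fin 5 → ℝ)) :
    lieBracket g f = fun z => -(lieBracket f g z) := by
  funext z
  simp [lieBracket, neg_sub]

lemma lie_self' (f : (Fin 5 → ℝ) → (Fin 5 → ℝ)) : lieBracket f f = F2 0 0 := by
  funext z i
  fin_cases i <;> simp [lieBracket, F2]

lemma F2_neg (e f : ℝ) : (fun z => -(F2 e f z)) = F2 (-e) (-f) := by
  funext z i
  fin_cases i <;> simp [F2]

lemma F3_neg (a b : ℝ) : (fun z => -(F3 a b z)) = F3 (-a) (-b) := by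
  funext z i
  fin_cases i <;> simp [F3]

lemma F4_neg (s : ℝ) : (fun z => -(F4 s z)) = F4 (-s) := by
  funext z i
  fin_cases i <;> simp [F4]

lemma lie_g1_g2 (α κ θ : ℝ) : lieBracket (g1 κ) (g2 α θ) = F2 1 (θ - 3*κ - α) := by
  funext z
  show fderiv ℝ (g2 α θ) z (g1 κ z) - fderiv ℝ (g1 κ) z (g2 α θ z) = F2 1 (θ - 3*κ - α) z
  rw [(hg1 κ z).fderiv, (hg2 α θ z).fderiv]
  funext i
  fin_cases i <;>
    simp [F2, g1, g2, P, ContinuousLinearMap.pi_apply, ContinuousLinearMap.smul_apply,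
      ContinuousLinearMap.sub_apply, ContinuousLinearMap.add_apply, ContinuousLinearMap.neg_apply,
      ContinuousLinearMap.proj_apply] <;> ring

lemma lie_g1_F2 (κ e f : ℝ) : lieBracket (g1 κ) (F2 e f) = F3 e 0 := by
  funext z
  show fderiv ℝ (F2 e f) z (g1 κ z) - fderiv ℝ (g1 κ) z (F2 e f z) = F3 e 0 z
  rw [(hg1 κ z).fderiv, (hF2 e f z).fderiv]
  funext i
  fin_cases i <;>
    simp [F2, F3, g1, P, ContinuousLinearMap.pi_apply, ContinuousLinearMap.smul_apply,
      ContinuousLinearMap.sub_apply, ContinuousLinearMap.add_apply, ContinuousLinearMap.neg_apply,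
      ContinuousLinearMap.proj_apply] <;> ring

lemma lie_g2_F2 (α θ e f : ℝ) :
    lieBracket (g2 α θ) (F2 e f) = F3 0 (2*f + θ*e) := by
  funext z
  show fderiv ℝ (F2 e f) z (g2 α θ z) - fderiv ℝ (g2 α θ) z (F2 e f z) = F3 0 (2*f + θ*e) z
  rw [(hg2 α θ z).fderiv, (hF2 e f z).fderiv]
  funext i
  fin_cases i <;>
    simp [F2, F3, g2, P, ContinuousLinearMap.pi_apply, ContinuousLinearMap.smul_apply,
      ContinuousLinearMap.sub_apply, ContinuousLinearMap.add_apply, ContinuousLinearMap.neg_apply,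
      ContinuousLinearMap.proj_apply] <;> ring

lemma lie_F2_F2 (e f e' f' : ℝ) : lieBracket (F2 e f) (F2 e' f') = F4 0 := by
  funext z
  show fderiv ℝ (F2 e' f') z (F2 e f z) - fderiv ℝ (F2 e f) z (F2 e' f' z) = F4 0 z
  rw [(hF2 e f z).fderiv, (hF2 e' f' z).fderiv]
  funext i
  fin_cases i <;>
    simp [F2, F4, P, ContinuousLinearMap.pi_apply, ContinuousLinearMap.smul_apply,
      ContinuousLinearMap.sub_apply, ContinuousLinearMap.add_apply,
      ContinuousLinearMap.proj_apply]

lemma lie_g1_F3 (κ a b : ℝ) : lieBracket (g1 κ) (F3 a b) = F4 a := by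
  funext z
  show fderiv ℝ (F3 a b) z (g1 κ z) - fderiv ℝ (g1 κ) z (F3 a b z) = F4 a z
  rw [(hg1 κ z).fderiv, (hF3 a b z).fderiv]
  funext i
  fin_cases i <;>
    simp [F3, F4, g1, P, ContinuousLinearMap.pi_apply, ContinuousLinearMap.smul_apply,
      ContinuousLinearMap.sub_apply, ContinuousLinearMap.add_apply, ContinuousLinearMap.neg_apply,
      ContinuousLinearMap.proj_apply]

lemma lie_g2_F3 (α θ a b : ℝ) : lieBracket (g2 α θ) (F3 a b) = F4 b := by
  funext z
  show fderiv ℝ (F3 a b) z (g2 α θ z) - fderiv ℝ (g2 α θ) z (F3 a b z) = F4 b z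
  rw [(hg2 α θ z).fderiv, (hF3 a b z).fderiv]
  funext i
  fin_cases i <;>
    simp [F3, F4, g2, P, ContinuousLinearMap.pi_apply, ContinuousLinearMap.smul_apply,
      ContinuousLinearMap.sub_apply, ContinuousLinearMap.add_apply, ContinuousLinearMap.neg_apply,
      ContinuousLinearMap.proj_apply]

lemma lie_g1_F4 (κ s : ℝ) (z : Fin 5 → ℝ) : lieBracket (g1 κ) (F4 s) z = 0 := by
  show fderiv ℝ (F4 s) z (g1 κ z) - fderiv ℝ (g1 κ) z (F4 s z) = 0
  rw [(hg1 κ z).fderiv, (hF4 s z).fderiv]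
  funext i
  fin_cases i <;>
    simp [F4, g1, P, ContinuousLinearMap.pi_apply, ContinuousLinearMap.smul_apply,
      ContinuousLinearMap.sub_apply, ContinuousLinearMap.add_apply, ContinuousLinearMap.neg_apply,
      ContinuousLinearMap.proj_apply]

lemma lie_g2_F4 (α θ s : ℝ) (z : Fin 5 → ℝ) : lieBracket (g2 α θ) (F4 s) z = 0 := by
  show fderiv ℝ (F4 s) z (g2 α θ z) - fderiv ℝ (g2 α θ) z (F4 s z) = 0
  rw [(hg2 α θ z).fderiv, (hF4 s z).fderiv]
  funext i
  fin_cases i <;>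
    simp [F4, g2, P, ContinuousLinearMap.pi_apply, ContinuousLinearMap.smul_apply,
      ContinuousLinearMap.sub_apply, ContinuousLinearMap.add_apply, ContinuousLinearMap.neg_apply,
      ContinuousLinearMap.proj_apply]

/-! ### Classification of iterated brackets -/

lemma classify (α κ θ : ℝ) : ∀ {k : ℕ} {X : (Fin 5 → ℝ) → (Fin 5 → ℝ)},
    IterBracket α κ θ k X →
    1 ≤ k ∧ (k = 1 → X = g1 κ ∨ X = g2 α θ) ∧ (k = 2 → ∃ e f, X = F2 e f) ∧
      (k = 3 → ∃ a b, X = F3 a b) ∧ (k = 4 → ∃ s, X = F4 s) := by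
  intro k X hX
  induction hX with
  | base1 => exact ⟨le_refl 1, fun _ => Or.inl rfl, by omega, by omega, by omega⟩
  | base2 => exact ⟨le_refl 1, fun _ => Or.inr rfl, by omega, by omega, by omega⟩
  | @br j k X Y hj hk ihX ihY =>
    obtain ⟨hj1, hX1, hX2, hX3, _⟩ := ihX
    obtain ⟨hk1, hY1, hY2, hY3, _⟩ := ihY
    refine ⟨by omega, by omega, ?_, ?_, ?_⟩
    · -- length 2 : (1,1)
      intro h2
      have hj' : j = 1 := by omega
      have hk' : k = 1 := by omega
      rcases hX1 hj' with rfl | rfl <;> rcases hY1 hk' with rfl | rfl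
      · exact ⟨0, 0, lie_self' _⟩
      · exact ⟨1, θ - 3*κ - α, lie_g1_g2 α κ θ⟩
      · refine ⟨-1, -(θ - 3*κ - α), ?_⟩
        rw [lie_swap, lie_g1_g2 α κ θ, F2_neg]
      · exact ⟨0, 0, lie_self' _⟩
    · -- length 3 : (1,2) or (2,1)
      intro h3
      have : (j = 1 ∧ k = 2) ∨ (j = 2 ∧ k = 1) := by omega
      rcases this with ⟨hj', hk'⟩ | ⟨hj', hk'⟩
      · obtain ⟨e, f, rfl⟩ := hY2 hk'
        rcases hX1 hj' with rfl | rfl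
        · exact ⟨e, 0, lie_g1_F2 κ e f⟩
        · exact ⟨0, 2*f + θ*e, lie_g2_F2 α θ e f⟩
      · obtain ⟨e, f, rfl⟩ := hX2 hj'
        rcases hY1 hk' with rfl | rfl
        · refine ⟨-e, 0, ?_⟩
          rw [lie_swap, lie_g1_F2 κ e f, F3_neg, neg_zero]
        · refine ⟨0, -(2*f + θ*e), ?_⟩
          rw [lie_swap, lie_g2_F2 α θ e f, F3_neg, neg_zero]
    · -- length 4 : (1,3), (2,2) or (3,1)
      intro h4
      have : (j = 1 ∧ k = 3) ∨ (j = 2 ∧ k = 2) ∨ (j = 3 ∧ k = 1) := by omega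
      rcases this with ⟨hj', hk'⟩ | ⟨hj', hk'⟩ | ⟨hj', hk'⟩
      · obtain ⟨a, b, rfl⟩ := hY3 hk'
        rcases hX1 hj' with rfl | rfl
        · exact ⟨a, lie_g1_F3 κ a b⟩
        · exact ⟨b, lie_g2_F3 α θ a b⟩
      · obtain ⟨e, f, rfl⟩ := hX2 hj'
        obtain ⟨e', f', rfl⟩ := hY2 hk'
        exact ⟨0, lie_F2_F2 e f e' f'⟩
      · obtain ⟨a, b, rfl⟩ := hX3 hj'
        rcases hY1 hk' with rfl | rfl
        · refine ⟨-a, ?_⟩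
          rw [lie_swap, lie_g1_F3 κ a b, F4_neg]
        · refine ⟨-b, ?_⟩
          rw [lie_swap, lie_g2_F3 α θ a b, F4_neg]

/-- Every iterated bracket of length 5 vanishes: bracketing a generator with any
bracket of length 4 gives the zero vector field, i.e. the Lie algebra generated
by `g₁, g₂` is nilpotent of step 4. -/
theorem nilpotent_step_four (α κ θ : ℝ) (X : (Fin 5 → ℝ) → (Fin 5 → ℝ))
    (hX : IterBracket α κ θ 4 X) :
    (∀ z, lieBracket (g1 κ) X z = 0) ∧ (∀ z, lieBracket (g2 α θ) X z = 0) := by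
  obtain ⟨s, rfl⟩ := (classify α κ θ hX).2.2.2.2 rfl
  exact ⟨lie_g1_F4 κ s, lie_g2_F4 α θ s⟩
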